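/- (Thrall's identity, equation (6).) In ℚ[[x,y]] one has ((1−x²)(1−xy)(1−y²))^{-1} = Σ_{j≥0} Σ_{k≥0} S_{(2j+2k, 2k)}(x,y). Equivalently, the multiplicity series of the symmetric function ((1−x²)(1−xy)(1−y²))^{-1} is ((1−t²)(1−v²))^{-1}, i.e. the multiplicity of S_{(λ1,λ2)} is 1 if λ2 and λ1−λ2 are both even, and 0 otherwise. -/

import Mathlib

open Finset

abbrev Q2 : Type := MvPowerSeries (Fin 2) ℚ

noncomputable def Xv (i : Fin 2) : Q2 := MvPowerSeries.X i

noncomputable def mon (i j : ℕ) : Fin 2 →₀ ℕ := Finsupp.single 0 i + Finsupp.single 1 j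

noncomputable def c (i j : ℕ) (f : Q2) : ℚ := MvPowerSeries.coeff (mon i j) f

/-- Schur function S_{(l1,l2)}(x,y) for l1 ≥ l2. -/
noncomputable def schur (l1 l2 : ℕ) : Q2 :=
  (Xv 0 * Xv 1) ^ l2 * ∑ i ∈ range (l1 - l2 + 1), Xv 0 ^ i * Xv 1 ^ (l1 - l2 - i)

/-- f = Σ_{l1 ≥ l2 ≥ 0} m(l1,l2) · S_{(l1,l2)}, expressed coefficientwise
(each coefficient receives only finitely many contributions, since `schur l1 l2`
is homogeneous of degree `l1 + l2`). -/
def IsSchurExpansion (m : ℕ → ℕ → ℚ) (f : Q2) : Prop :=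
  ∀ i j : ℕ, c i j f =
    ∑ l1 ∈ range (i + j + 1), ∑ l2 ∈ range (l1 + 1), m l1 l2 * c i j (schur l1 l2)

/-- h(t,v) = Σ_{l1 ≥ l2 ≥ 0} m(l1,l2) t^{l1-l2} v^{l2}, the multiplicity series. -/
def IsMultSeries (m : ℕ → ℕ → ℚ) (h : Q2) : Prop :=
  ∀ p q : ℕ, c p q h = m (p + q) q

/-- Substitution of φ0, φ1 (series with zero constant term) for the two variables of h:
the coefficient of a monomial e in h(φ0,φ1) only receives contributions from monomials
t^p v^q of h with p + q ≤ |e|. -/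
noncomputable def subst2 (φ0 φ1 h : Q2) : Q2 :=
  fun e => ∑ p ∈ range (e 0 + e 1 + 1), ∑ q ∈ range (e 0 + e 1 + 1),
    MvPowerSeries.coeff (mon p q) h * MvPowerSeries.coeff e (φ0 ^ p * φ1 ^ q)

/-- Substitution of a series φ with zero constant term into a one-variable series a. -/
noncomputable def substP (φ : Q2) (a : PowerSeries ℚ) : Q2 :=
  fun e => ∑ k ∈ range (e 0 + e 1 + 1),
    PowerSeries.coeff k a * MvPowerSeries.coeff e (φ ^ k)

/-! ### Auxiliary material -/

lemma mon_apply0 (i j : ℕ) : mon i j 0 = i := by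
  simp [mon, Finsupp.single_apply]

lemma mon_apply1 (i j : ℕ) : mon i j 1 = j := by
  simp [mon, Finsupp.single_apply]

lemma eq_mon (e : Fin 2 →₀ ℕ) : e = mon (e 0) (e 1) := by
  refine Finsupp.ext fun a => ?_
  fin_cases a
  · simp [mon_apply0]
  · simp [mon_apply1]

lemma mon_le_iff (a b : ℕ) (e : Fin 2 →₀ ℕ) : mon a b ≤ e ↔ a ≤ e 0 ∧ b ≤ e 1 := by
  rw [Finsupp.le_def]
  constructor
  · intro h
    exact ⟨by simpa [mon_apply0] using h 0, by simpa [mon_apply1] using h 1⟩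
  · rintro ⟨h0, h1⟩ a'
    fin_cases a'
    · simpa [mon_apply0] using h0
    · simpa [mon_apply1] using h1

lemma eq_zero_iff (e : Fin 2 →₀ ℕ) : e = 0 ↔ e 0 = 0 ∧ e 1 = 0 := by
  constructor
  · intro h; simp [h]
  · rintro ⟨h0, h1⟩
    rw [eq_mon e, h0, h1]
    simp [mon]

lemma mon_eq_iff (a b i j : ℕ) : mon a b = mon i j ↔ a = i ∧ b = j := by
  constructor
  · intro h
    constructor
    · have := congrArg (fun f : Fin 2 →₀ ℕ => f 0) h
      simpa [mon_apply0] using this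
    · have := congrArg (fun f : Fin 2 →₀ ℕ => f 1) h
      simpa [mon_apply1] using this
  · rintro ⟨rfl, rfl⟩; rfl

/-- The candidate inverse series. -/
noncomputable def gS : Q2 :=
  fun e => if e 0 % 2 = e 1 % 2 then ((min (e 0) (e 1)) / 2 + 1 : ℕ) else 0

noncomputable def g1S : Q2 :=
  fun e => if e 1 ≤ e 0 ∧ e 0 % 2 = e 1 % 2 then 1 else 0

noncomputable def g0S : Q2 :=
  fun e => if e 1 = 0 ∧ e 0 % 2 = 0 then 1 else 0

lemma coeff_fun (h : Q2) (e : Fin 2 →₀ ℕ) : MvPowerSeries.coeff e h = h e :=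
  rfl

lemma coeff_sub_monmul (d : Fin 2 →₀ ℕ) (h : Q2) (e : Fin 2 →₀ ℕ) :
    MvPowerSeries.coeff e ((1 - MvPowerSeries.monomial d 1) * h)
      = h e - (if d ≤ e then h (e - d) else 0) := by
  rw [sub_mul, one_mul, map_sub, MvPowerSeries.coeff_monomial_mul]
  split_ifs <;> simp [coeff_fun]

lemma X0_pow2 : Xv 0 ^ 2 = MvPowerSeries.monomial (mon 2 0) 1 := by
  rw [Xv, MvPowerSeries.X_pow_eq]
  congr 1
  simp [mon]

lemma X1_pow2 : Xv 1 ^ 2 = MvPowerSeries.monomial (mon 0 2) 1 := by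
  rw [Xv, MvPowerSeries.X_pow_eq]
  congr 1
  simp [mon]

lemma X0_mul_X1 : Xv 0 * Xv 1 = MvPowerSeries.monomial (mon 1 1) 1 := by
  rw [Xv, Xv, MvPowerSeries.X_def, MvPowerSeries.X_def,
    MvPowerSeries.monomial_mul_monomial, one_mul]
  rfl

lemma sub_apply0 (e : Fin 2 →₀ ℕ) (a b : ℕ) : (e - mon a b) 0 = e 0 - a := by
  rw [Finsupp.tsub_apply, mon_apply0]

lemma sub_apply1 (e : Fin 2 →₀ ℕ) (a b : ℕ) : (e - mon a b) 1 = e 1 - b := by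
  rw [Finsupp.tsub_apply, mon_apply1]

lemma L1 : (1 - Xv 1 ^ 2) * gS = g1S := by
  apply MvPowerSeries.ext; intro e
  rw [X1_pow2, coeff_sub_monmul, coeff_fun]
  simp only [mon_le_iff, gS, g1S, sub_apply0, sub_apply1, Nat.sub_zero, Nat.zero_le, true_and]
  split_ifs <;>
    first
      | (exfalso; omega)
      | ((try rw [sub_eq_iff_eq_add]); norm_cast <;> omega)
      | norm_num

lemma L2 : (1 - Xv 0 * Xv 1) * g1S = g0S := by
  apply MvPowerSeries.ext; intro e
  rw [X0_mul_X1, coeff_sub_monmul, coeff_fun]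
  simp only [mon_le_iff, g1S, g0S, sub_apply0, sub_apply1]
  split_ifs <;>
    first
      | (exfalso; omega)
      | ((try rw [sub_eq_iff_eq_add]); norm_cast <;> omega)
      | norm_num

lemma L3 : (1 - Xv 0 ^ 2) * g0S = 1 := by
  apply MvPowerSeries.ext; intro e
  rw [X0_pow2, coeff_sub_monmul, MvPowerSeries.coeff_one]
  simp only [mon_le_iff, g0S, eq_zero_iff, sub_apply0, sub_apply1, Nat.sub_zero, Nat.zero_le,
    and_true]
  split_ifs <;>
    first
      | (exfalso; omega)
      | ((try rw [sub_eq_iff_eq_add]); norm_cast <;> omega)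
      | norm_num

lemma schur_coeff (i j l1 l2 : ℕ) (h : l2 ≤ l1) :
    c i j (schur l1 l2) = if i + j = l1 + l2 ∧ l2 ≤ i ∧ l2 ≤ j then 1 else 0 := by
  have hterm : ∀ t, (Xv 0 * Xv 1) ^ l2 * (Xv 0 ^ t * Xv 1 ^ (l1 - l2 - t))
      = MvPowerSeries.monomial (mon (l2 + t) (l2 + (l1 - l2 - t))) 1 := by
    intro t
    rw [mul_pow, Xv, Xv, MvPowerSeries.X_pow_eq, MvPowerSeries.X_pow_eq,
      MvPowerSeries.X_pow_eq, MvPowerSeries.X_pow_eq,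
      MvPowerSeries.monomial_mul_monomial, MvPowerSeries.monomial_mul_monomial,
      MvPowerSeries.monomial_mul_monomial]
    have hix : Finsupp.single (0 : Fin 2) l2 + Finsupp.single (1 : Fin 2) l2
        + (Finsupp.single (0 : Fin 2) t + Finsupp.single (1 : Fin 2) (l1 - l2 - t))
        = mon (l2 + t) (l2 + (l1 - l2 - t)) := by
      refine Finsupp.ext fun x => ?_
      fin_cases x <;> simp [mon, Finsupp.single_apply, Finsupp.add_apply]
    rw [hix]
    norm_num
  rw [c, schur, Finset.mul_sum, map_sum]
  simp only [hterm, MvPowerSeries.coeff_monomial, mon_eq_iff]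
  by_cases hc : i + j = l1 + l2 ∧ l2 ≤ i ∧ l2 ≤ j
  · rw [if_pos hc, Finset.sum_eq_single_of_mem (i - l2) (Finset.mem_range.mpr (by omega))]
    · rw [if_pos (by omega)]
    · intro t htmem ht
      have := Finset.mem_range.mp htmem
      rw [if_neg (by omega)]
  · rw [if_neg hc, Finset.sum_eq_zero]
    intro t htmem
    have := Finset.mem_range.mp htmem
    rw [if_neg (by omega)]

lemma inner_count (i j K : ℕ) :
    ∑ J ∈ range (i + j + 1),
        (if i + j = 2 * J + 2 * K + 2 * K ∧ 2 * K ≤ i ∧ 2 * K ≤ j then (1 : ℚ) else 0)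
      = if (i + j) % 2 = 0 ∧ 2 * K ≤ i ∧ 2 * K ≤ j then 1 else 0 := by
  by_cases hc : (i + j) % 2 = 0 ∧ 2 * K ≤ i ∧ 2 * K ≤ j
  · rw [if_pos hc,
      Finset.sum_eq_single_of_mem ((i + j - 4 * K) / 2) (Finset.mem_range.mpr (by omega))]
    · rw [if_pos (by omega)]
    · intro t _ ht
      rw [if_neg (by omega)]
  · rw [if_neg hc, Finset.sum_eq_zero]
    intro t _
    rw [if_neg (by omega)]

lemma filter_count (n cnt : ℕ) (h : cnt ≤ n) :
    ∑ K ∈ range n, (if K < cnt then (1 : ℚ) else 0) = cnt := by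
  have hf : (range n).filter (fun K => K < cnt) = range cnt := by
    ext x
    simp only [Finset.mem_filter, Finset.mem_range]
    omega
  rw [Finset.sum_boole, hf, Finset.card_range]

lemma outer_count (i j : ℕ) :
    ∑ K ∈ range (i + j + 1),
        (if (i + j) % 2 = 0 ∧ 2 * K ≤ i ∧ 2 * K ≤ j then (1 : ℚ) else 0)
      = if i % 2 = j % 2 then ((min i j / 2 + 1 : ℕ) : ℚ) else 0 := by
  by_cases hp : (i + j) % 2 = 0
  · rw [if_pos (by omega)]
    have hcong : ∀ K ∈ range (i + j + 1),
        (if (i + j) % 2 = 0 ∧ 2 * K ≤ i ∧ 2 * K ≤ j then (1 : ℚ) else 0)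
          = if K < min i j / 2 + 1 then 1 else 0 := by
      intro K _
      refine if_congr ⟨fun h' => by omega, fun h' => by omega⟩ rfl rfl
    rw [Finset.sum_congr rfl hcong, filter_count _ _ (by omega)]
  · rw [if_neg (by omega), Finset.sum_eq_zero]
    intro K _
    rw [if_neg (by omega)]

/-- Thrall's identity, equation (6):
((1−x²)(1−xy)(1−y²))⁻¹ = Σ_{j≥0} Σ_{k≥0} S_{(2j+2k, 2k)}(x,y),
expressed coefficientwise (terms with j > i₁+i₂ or k > i₁+i₂ contribute 0, since
`schur (2j+2k) (2k)` is homogeneous of degree 2j+4k). -/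
theorem thrall_identity :
    ∀ i j : ℕ,
      c i j (((1 - Xv 0 ^ 2) * (1 - Xv 0 * Xv 1) * (1 - Xv 1 ^ 2))⁻¹)
        = ∑ J ∈ range (i + j + 1), ∑ K ∈ range (i + j + 1),
            c i j (schur (2 * J + 2 * K) (2 * K)) := by
  intro i j
  have hconst : MvPowerSeries.constantCoeff
      ((1 - Xv 0 ^ 2) * (1 - Xv 0 * Xv 1) * (1 - Xv 1 ^ 2)) ≠ 0 := by
    simp [Xv]
  have hmul : gS * ((1 - Xv 0 ^ 2) * (1 - Xv 0 * Xv 1) * (1 - Xv 1 ^ 2)) = 1 := by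
    calc gS * ((1 - Xv 0 ^ 2) * (1 - Xv 0 * Xv 1) * (1 - Xv 1 ^ 2))
        = (1 - Xv 0 ^ 2) * ((1 - Xv 0 * Xv 1) * ((1 - Xv 1 ^ 2) * gS)) := by ring
      _ = 1 := by rw [L1, L2, L3]
  have hinv : ((1 - Xv 0 ^ 2) * (1 - Xv 0 * Xv 1) * (1 - Xv 1 ^ 2))⁻¹ = gS :=
    (MvPowerSeries.inv_eq_iff_mul_eq_one hconst).mpr hmul
  rw [hinv]
  have hL : c i j gS = if i % 2 = j % 2 then ((min i j / 2 + 1 : ℕ) : ℚ) else 0 := by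
    rw [c, coeff_fun]
    simp only [gS, mon_apply0, mon_apply1]
  rw [hL, Finset.sum_comm]
  have h1 : ∀ K ∈ range (i + j + 1),
      ∑ J ∈ range (i + j + 1), c i j (schur (2 * J + 2 * K) (2 * K))
        = if (i + j) % 2 = 0 ∧ 2 * K ≤ i ∧ 2 * K ≤ j then (1 : ℚ) else 0 := by
    intro K _
    rw [← inner_count i j K]
    exact Finset.sum_congr rfl fun J _ => schur_coeff i j _ _ (by omega)
  rw [Finset.sum_congr rfl h1, outer_count]
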